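/- For all integers n ≥ 1, m ≥ 1, and 1 ≤ a ≤ n, there exists a set S ⊆ [0,n-1] × [0,m-1] such that each row of the rectangle (i.e., each set {(j,i) : 0 ≤ j ≤ n-1} for fixed i) contains exactly a elements of S, and every column (each set {(j,i) : 0 ≤ i ≤ m-1} for fixed j) contains at least ⌊am/n⌋ and at most ⌈am/n⌉ elements of S. -/

import Mathlib

open Finset

lemma aux_inj (n a : ℕ) (ha : 1 ≤ a) (han : a ≤ n) :
    Function.Injective (fun t : ℕ => (t % n, t / a)) := by
  intro t1 t2 h
  simp only [Prod.mk.injEq] at h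
  obtain ⟨h1, h2⟩ := h
  wlog hle : t1 ≤ t2 generalizing t1 t2
  · exact (this h1.symm h2.symm (by omega)).symm
  have hd : t2 - t1 < a := by
    have e1 := Nat.div_add_mod t1 a
    have e2 : a * (t1 / a) + t2 % a = t2 := by rw [h2]; exact Nat.div_add_mod t2 a
    have := Nat.mod_lt t2 (show 0 < a by omega)
    have := Nat.mod_lt t1 (show 0 < a by omega)
    omega
  obtain ⟨k, hk⟩ := (Nat.modEq_iff_dvd' hle).mp h1
  rcases k with _ | k
  · omega
  · have : n ≤ n * (k + 1) := Nat.le_mul_of_pos_right n (by omega)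
    omega

lemma col_lower (N n j : ℕ) (hn : 0 < n) (hj : j < n) :
    N / n ≤ ((range N).filter (fun t => t % n = j)).card := by
  have : (range (N / n)).image (fun k => j + k * n) ⊆
      (range N).filter (fun t => t % n = j) := by
    intro x hx
    simp only [mem_image, mem_range] at hx
    obtain ⟨k, hk, rfl⟩ := hx
    have : (k + 1) * n ≤ N := (Nat.le_div_iff_mul_le hn).mp hk
    simp only [mem_filter, mem_range, Nat.add_mul_mod_self_right]
    exact ⟨by nlinarith, Nat.mod_eq_of_lt hj⟩
  calc N / n = ((range (N / n)).image (fun k => j + k * n)).card := by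
        rw [Finset.card_image_of_injective _ (fun x y h => by
          simpa using Nat.eq_of_mul_eq_mul_right hn (by omega)), card_range]
    _ ≤ _ := Finset.card_le_card this

lemma col_upper (N n j : ℕ) (hn : 0 < n) :
    ((range N).filter (fun t => t % n = j)).card ≤ (N + n - 1) / n := by
  have := Finset.card_le_card_of_injOn (fun t => t / n)
    (s := (range N).filter (fun t => t % n = j)) (t := range ((N + n - 1) / n))
    (fun t ht => by
      simp only [mem_coe, mem_filter, mem_range] at ht ⊢
      have h : t / n + 1 ≤ (N + n - 1) / n := by
        rw [Nat.le_div_iff_mul_le hn]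
        have h1 := Nat.div_mul_le_self t n
        have h2 : (t / n + 1) * n = t / n * n + n := by ring
        omega
      omega)
    (fun t1 h1 t2 h2 h => by
      simp only [mem_coe, mem_filter, mem_range] at h1 h2
      simp only at h
      have e1 := Nat.div_add_mod t1 n
      have e2 : n * (t1 / n) + t2 % n = t2 := by rw [h]; exact Nat.div_add_mod t2 n
      omega)
  simpa using this

/-- existence of a set with exactly `a` elements in each row
and between `⌊am/n⌋` and `⌈am/n⌉` elements in each column of the rectangle
`R_{n,m} = [0,n-1] × [0,m-1]` (first coordinate `< n`, second `< m`). -/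
theorem stmt_0 (n m a : ℕ) (hn : 1 ≤ n) (hm : 1 ≤ m) (ha : 1 ≤ a) (han : a ≤ n) :
    ∃ S : Finset (ℕ × ℕ), S ⊆ Finset.range n ×ˢ Finset.range m ∧
      (∀ i < m, (S.filter (fun p => p.2 = i)).card = a) ∧
      (∀ j < n, a * m / n ≤ (S.filter (fun p => p.1 = j)).card ∧
        (S.filter (fun p => p.1 = j)).card ≤ (a * m + n - 1) / n) := by
  set f : ℕ → ℕ × ℕ := fun t => (t % n, t / a) with hf
  have hinj : Function.Injective f := aux_inj n a ha han
  refine ⟨(range (a * m)).image f, ?_, ?_, ?_⟩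
  · intro p hp
    simp only [mem_image, mem_range] at hp
    obtain ⟨t, ht, rfl⟩ := hp
    simp only [mem_product, mem_range, hf]
    exact ⟨Nat.mod_lt _ (by omega), Nat.div_lt_of_lt_mul (by omega)⟩
  · intro i hi
    rw [Finset.filter_image, Finset.card_image_of_injective _ hinj]
    have : (range (a * m)).filter (fun t => (f t).2 = i) = Ico (a * i) (a * i + a) := by
      ext t
      simp only [mem_filter, mem_range, mem_Ico, hf]
      constructor
      · rintro ⟨ht, rfl⟩
        have e := Nat.div_add_mod t a
        have hlt := Nat.mod_lt t (show 0 < a by omega)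
        omega
      · rintro ⟨h1, h2⟩
        have hdiv : t / a = i := by
          have e := Nat.div_add_mod t a
          have hlt := Nat.mod_lt t (show 0 < a by omega)
          by_contra hne
          rcases Nat.lt_or_ge (t / a) i with hl | hg
          · have key := Nat.mul_le_mul_left a (show t / a + 1 ≤ i from hl)
            have hx : a * (t / a + 1) = a * (t / a) + a := by ring
            omega
          · have key := Nat.mul_le_mul_left a (show i + 1 ≤ t / a by omega)
            have hx : a * (i + 1) = a * i + a := by ring
            omega
        refine ⟨?_, hdiv⟩
        have key := Nat.mul_le_mul_left a (show i + 1 ≤ m from hi)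
        have hx : a * (i + 1) = a * i + a := by ring
        omega
    rw [this, Nat.card_Ico]
    omega
  · intro j hj
    rw [Finset.filter_image, Finset.card_image_of_injective _ hinj]
    have heq : (range (a * m)).filter (fun t => (f t).1 = j) =
        (range (a * m)).filter (fun t => t % n = j) := rfl
    rw [heq]
    exact ⟨col_lower _ _ _ (by omega) hj, col_upper _ _ _ (by omega)⟩
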